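/- arXiv:0908.0137 — 3 statements merged into one kernel-verified Lean document; each statement's English description precedes it below -/
import Mathlib

section
/- Let M be an n×n real symmetric matrix with simple (pairwise distinct) eigenvalues, let S = M + E with E symmetric, and fix k. Let (λ_k, u_k) be the k-th eigenpair of M with ‖u_k‖₂ = 1 and (λ_k(S), v_k) the k-th eigenpair of S, with v_k normalized so that v_k^T u_k = 1. Let R_k = Σ_{j≠k} (λ_j − λ_k)^{-1} u_j u_j^T be the reduced resolvent of M at λ_k, let Δ_k = R_k(E − (λ_k(S) − λ_k)·Id), and let d_k be the distance from λ_k to the nearest other eigenvalue of M. If ‖E‖₂ < d_k/2, then for every integer j ≥ 0: ‖ v_k − u_k + (Σ_{m=0}^{j} (−1)^m Δ_k^m) R_k E u_k ‖₂ ≤ (1/2)·(2‖E‖₂/d_k)^{j+2} · 1/(1 − 2‖E‖₂/d_k). -/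
open MeasureTheory ProbabilityTheory Filter Matrix
open scoped ENNReal NNReal BigOperators

/-- The spectral norm (largest singular value) of a real matrix, i.e. the operator norm
of the induced map between Euclidean spaces. -/
noncomputable def matSpectralNorm {m n : Type*} [Fintype m] [Fintype n] [DecidableEq n]
    (A : Matrix m n ℝ) : ℝ :=
  ‖LinearMap.toContinuousLinearMap (Matrix.toEuclideanLin A)‖

/-- The Euclidean norm of a vector. -/
noncomputable def euclNorm {n : Type*} [Fintype n] (x : n → ℝ) : ℝ :=
  Real.sqrt (∑ i, x i ^ 2)

/-- The sup norm `max_{i,j} |A i j|` of a matrix. -/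
noncomputable def supNorm {m n : Type*} [Fintype m] [Fintype n] (A : Matrix m n ℝ) : ℝ :=
  ‖(fun i j => A i j : m → n → ℝ)‖

/-- An `m × m` Bernoulli-type symmetric random matrix with parameter `p`: the
on-or-above-diagonal entries are independent, equal to `√((1-p)/p)` with probability `p`
and to `-√(p/(1-p))` with probability `1-p`. -/
def IsBernoulliType {Ω : Type*} [MeasurableSpace Ω] (P : Measure Ω) {m : ℕ} (p : ℝ)
    (C : Ω → Matrix (Fin m) (Fin m) ℝ) : Prop :=
  (∀ ω, (C ω).IsSymm) ∧
  (∀ i j, Measurable fun ω => C ω i j) ∧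
  iIndepFun (m := fun _ : {q : Fin m × Fin m // q.1 ≤ q.2} => (inferInstance : MeasurableSpace ℝ))
    (fun q ω => C ω q.val.1 q.val.2) P ∧
  ∀ i j : Fin m, i ≤ j →
    P {ω | C ω i j = Real.sqrt ((1 - p) / p)} = ENNReal.ofReal p ∧
    P {ω | C ω i j = -Real.sqrt (p / (1 - p))} = ENNReal.ofReal (1 - p)

/-- `E` is the subsampling residual `E = S - M` of the symmetric matrix `M` with sampling
probability `p`; equivalently `E = √((1-p)/p) • (M ∘ C)` with `C` Bernoulli-type. -/
def IsSubsampleResidual {Ω : Type*} [MeasurableSpace Ω] (P : Measure Ω) {n : ℕ} (p : ℝ)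
    (M : Matrix (Fin n) (Fin n) ℝ) (E : Ω → Matrix (Fin n) (Fin n) ℝ) : Prop :=
  ∃ C : Ω → Matrix (Fin n) (Fin n) ℝ, IsBernoulliType P p C ∧
    ∀ ω, E ω = Real.sqrt ((1 - p) / p) • Matrix.hadamard M (C ω)

open scoped RealInnerProductSpace

section EigenvectorPerturbationHelpers

/-- Auxiliary identification of `Fin n → ℝ` with Euclidean space. -/
noncomputable def toE {n : ℕ} (x : Fin n → ℝ) : EuclideanSpace ℝ (Fin n) :=
  (WithLp.equiv 2 (Fin n → ℝ)).symm x

variable {n : ℕ}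

lemma euclNorm_eq (x : Fin n → ℝ) : euclNorm x = ‖toE x‖ := by
  rw [EuclideanSpace.norm_eq, euclNorm]
  congr 1; apply Finset.sum_congr rfl; intro i _
  simp [toE, Real.norm_eq_abs, sq_abs]

lemma toE_add (x y : Fin n → ℝ) : toE (x + y) = toE x + toE y := rfl
lemma toE_sub (x y : Fin n → ℝ) : toE (x - y) = toE x - toE y := rfl
lemma toE_smul (c : ℝ) (x : Fin n → ℝ) : toE (c • x) = c • toE x := rfl
lemma toE_neg (x : Fin n → ℝ) : toE (-x) = - toE x := rfl
lemma toE_sum {ι : Type*} (s : Finset ι) (f : ι → (Fin n → ℝ)) :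
    toE (∑ i ∈ s, f i) = ∑ i ∈ s, toE (f i) := by
  induction s using Finset.cons_induction with
  | empty => rfl
  | cons i s hi ih => rw [Finset.sum_cons, Finset.sum_cons, toE_add, ih]

lemma toE_mulVec (A : Matrix (Fin n) (Fin n) ℝ) (x : Fin n → ℝ) :
    toE (A.mulVec x) = Matrix.toEuclideanLin A (toE x) :=
  (Matrix.toEuclideanLin_apply_piLp_toLp A x).symm

lemma inner_toE (x y : Fin n → ℝ) : ⟪toE x, toE y⟫ = ∑ i, x i * y i := by
  simp [toE, PiLp.inner_apply, RCLike.inner_apply, mul_comm]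

lemma spec_nonneg (A : Matrix (Fin n) (Fin n) ℝ) : 0 ≤ matSpectralNorm A := norm_nonneg _

lemma norm_toEuclideanLin_le (A : Matrix (Fin n) (Fin n) ℝ) (y : EuclideanSpace ℝ (Fin n)) :
    ‖Matrix.toEuclideanLin A y‖ ≤ matSpectralNorm A * ‖y‖ := by
  exact (LinearMap.toContinuousLinearMap (Matrix.toEuclideanLin A)).le_opNorm y

lemma norm_mulVec_le (A : Matrix (Fin n) (Fin n) ℝ) (x : Fin n → ℝ) :
    ‖toE (A.mulVec x)‖ ≤ matSpectralNorm A * ‖toE x‖ := by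
  rw [toE_mulVec]
  exact norm_toEuclideanLin_le A (toE x)

lemma spec_le_of (A : Matrix (Fin n) (Fin n) ℝ) (c : ℝ) (hc : 0 ≤ c)
    (h : ∀ x : Fin n → ℝ, ‖toE (A.mulVec x)‖ ≤ c * ‖toE x‖) : matSpectralNorm A ≤ c := by
  apply ContinuousLinearMap.opNorm_le_bound _ hc
  intro y
  have := h ((WithLp.equiv 2 (Fin n → ℝ)) y)
  rw [toE_mulVec] at this
  simpa [toE] using this

lemma spec_add (A B : Matrix (Fin n) (Fin n) ℝ) :
    matSpectralNorm (A + B) ≤ matSpectralNorm A + matSpectralNorm B := by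
  unfold matSpectralNorm; rw [map_add, map_add]; exact norm_add_le _ _

lemma spec_smul (c : ℝ) (A : Matrix (Fin n) (Fin n) ℝ) :
    matSpectralNorm (c • A) = |c| * matSpectralNorm A := by
  unfold matSpectralNorm; rw [_root_.map_smul, _root_.map_smul]
  have h := norm_smul c (LinearMap.toContinuousLinearMap (Matrix.toEuclideanLin A))
  rw [Real.norm_eq_abs] at h
  exact h

lemma spec_one : matSpectralNorm (1 : Matrix (Fin n) (Fin n) ℝ) ≤ 1 := by
  apply spec_le_of _ _ zero_le_one
  intro x; rw [Matrix.one_mulVec, one_mul]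

lemma spec_mul (A B : Matrix (Fin n) (Fin n) ℝ) :
    matSpectralNorm (A * B) ≤ matSpectralNorm A * matSpectralNorm B := by
  apply spec_le_of _ _ (mul_nonneg (spec_nonneg A) (spec_nonneg B))
  intro x
  rw [← Matrix.mulVec_mulVec, mul_assoc]
  exact (norm_mulVec_le A _).trans (by
    have := norm_mulVec_le B x
    exact mul_le_mul_of_nonneg_left this (spec_nonneg A))

lemma spec_pow (A : Matrix (Fin n) (Fin n) ℝ) (m : ℕ) :
    matSpectralNorm (A ^ m) ≤ matSpectralNorm A ^ m := by
  induction m with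
  | zero => simpa using spec_one
  | succ m ih =>
    rw [pow_succ, pow_succ]
    exact (spec_mul _ _).trans (mul_le_mul_of_nonneg_right ih (spec_nonneg A))

lemma repr_sum (B : OrthonormalBasis (Fin n) ℝ (EuclideanSpace ℝ (Fin n))) (g : Fin n → ℝ)
    (i : Fin n) : B.repr (∑ j, g j • B j) i = g i := by
  rw [map_sum]
  simp only [B.repr_self]
  rw [WithLp.ofLp_sum, Finset.sum_apply]
  simp [EuclideanSpace.single_apply, PiLp.smul_apply]

lemma inner_eq_sum_repr (B : OrthonormalBasis (Fin n) ℝ (EuclideanSpace ℝ (Fin n)))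
    (x y : EuclideanSpace ℝ (Fin n)) : ⟪x, y⟫ = ∑ i, B.repr x i * B.repr y i := by
  calc ⟪x, y⟫ = ⟪B.repr x, B.repr y⟫ := (B.repr.inner_map_map x y).symm
    _ = ∑ i, B.repr x i * B.repr y i := by
      rw [PiLp.inner_apply]
      simp [RCLike.inner_apply, mul_comm]

lemma normsq_eq (B : OrthonormalBasis (Fin n) ℝ (EuclideanSpace ℝ (Fin n)))
    (x : EuclideanSpace ℝ (Fin n)) : ‖x‖ ^ 2 = ∑ i, B.repr x i ^ 2 := by
  rw [← real_inner_self_eq_norm_sq, inner_eq_sum_repr B]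
  simp [sq]

lemma repr_map (B : OrthonormalBasis (Fin n) ℝ (EuclideanSpace ℝ (Fin n)))
    (A : EuclideanSpace ℝ (Fin n) →ₗ[ℝ] EuclideanSpace ℝ (Fin n)) (a : Fin n → ℝ)
    (hA : ∀ i, A (B i) = a i • B i) (x : EuclideanSpace ℝ (Fin n)) (i : Fin n) :
    B.repr (A x) i = a i * B.repr x i := by
  have hx : A x = ∑ j, (a j * B.repr x j) • B j := by
    conv_lhs => rw [← B.sum_repr x]
    rw [map_sum]
    apply Finset.sum_congr rfl; intro j _
    rw [_root_.map_smul, hA j, smul_smul, mul_comm]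
  rw [hx, repr_sum]

lemma quad_eq (B : OrthonormalBasis (Fin n) ℝ (EuclideanSpace ℝ (Fin n)))
    (A : EuclideanSpace ℝ (Fin n) →ₗ[ℝ] EuclideanSpace ℝ (Fin n)) (a : Fin n → ℝ)
    (hA : ∀ i, A (B i) = a i • B i) (x : EuclideanSpace ℝ (Fin n)) :
    ⟪x, A x⟫ = ∑ i, a i * B.repr x i ^ 2 := by
  rw [inner_eq_sum_repr B]
  apply Finset.sum_congr rfl; intro i _
  rw [repr_map B A a hA]; ring

lemma card_le_subtype (k : Fin n) : Fintype.card {i : Fin n // i ≤ k} = k.1 + 1 := by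
  rw [Fintype.card_subtype]
  have : Finset.univ.filter (fun i : Fin n => i ≤ k) = Finset.Iic k := by ext i; simp
  rw [this, Fin.card_Iic]

lemma card_ge_subtype (k : Fin n) : Fintype.card {i : Fin n // k ≤ i} = n - k.1 := by
  rw [Fintype.card_subtype]
  have : Finset.univ.filter (fun i : Fin n => k ≤ i) = Finset.Ici k := by ext i; simp
  rw [this, Fin.card_Ici]

lemma weyl_aux (B C : OrthonormalBasis (Fin n) ℝ (EuclideanSpace ℝ (Fin n)))
    (A A' : EuclideanSpace ℝ (Fin n) →ₗ[ℝ] EuclideanSpace ℝ (Fin n))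
    (a b : Fin n → ℝ) (k : Fin n)
    (hA : ∀ i, A (B i) = a i • B i) (hA' : ∀ i, A' (C i) = b i • C i)
    (ha : Antitone a) (hb : Antitone b) (ε : ℝ)
    (hε : ∀ x : EuclideanSpace ℝ (Fin n), |⟪x, A x - A' x⟫| ≤ ε * ‖x‖ ^ 2) :
    a k ≤ b k + ε := by
  classical
  set V : Submodule ℝ (EuclideanSpace ℝ (Fin n)) :=
    Submodule.span ℝ (Set.range fun i : {i : Fin n // i ≤ k} => B i.1) with hV
  set W : Submodule ℝ (EuclideanSpace ℝ (Fin n)) :=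
    Submodule.span ℝ (Set.range fun i : {i : Fin n // k ≤ i} => C i.1) with hW
  have hfV : Module.finrank ℝ V = k.1 + 1 := by
    rw [hV]
    exact (finrank_span_eq_card
      (B.orthonormal.linearIndependent.comp _ Subtype.val_injective :
        LinearIndependent ℝ fun i : {i : Fin n // i ≤ k} => B i.1)).trans (card_le_subtype k)
  have hfW : Module.finrank ℝ W = n - k.1 := by
    rw [hW]
    exact (finrank_span_eq_card
      (C.orthonormal.linearIndependent.comp _ Subtype.val_injective :
        LinearIndependent ℝ fun i : {i : Fin n // k ≤ i} => C i.1)).trans (card_ge_subtype k)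
  have hsum : Module.finrank ℝ ↥(V ⊔ W) + Module.finrank ℝ ↥(V ⊓ W) = (k.1 + 1) + (n - k.1) := by
    rw [Submodule.finrank_sup_add_finrank_inf_eq, hfV, hfW]
  have htop : Module.finrank ℝ ↥(V ⊔ W) ≤ n := by
    have := Submodule.finrank_le (V ⊔ W)
    rwa [finrank_euclideanSpace_fin] at this
  have hpos : 0 < Module.finrank ℝ ↥(V ⊓ W) := by
    have hk := k.isLt
    omega
  have hne : V ⊓ W ≠ ⊥ := by
    intro hbot
    rw [hbot, finrank_bot] at hpos
    exact lt_irrefl 0 hpos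
  obtain ⟨x, hxmem, hx0⟩ := Submodule.ne_bot_iff _ |>.1 hne
  have hBc : ∀ i : Fin n, k < i → ⟪B i, x⟫ = 0 := by
    intro i hi
    have hsub : V ≤ LinearMap.ker ((innerSL ℝ (B i) : EuclideanSpace ℝ (Fin n) →L[ℝ] ℝ) : EuclideanSpace ℝ (Fin n) →ₗ[ℝ] ℝ) := by
      rw [hV, Submodule.span_le]
      rintro _ ⟨⟨j, hj⟩, rfl⟩
      have hij : i ≠ j := fun h => absurd (h ▸ hi) (not_lt.2 hj)
      simpa [LinearMap.mem_ker] using B.orthonormal.2 hij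
    simpa using hsub hxmem.1
  have hCc : ∀ i : Fin n, i < k → ⟪C i, x⟫ = 0 := by
    intro i hi
    have hsub : W ≤ LinearMap.ker ((innerSL ℝ (C i) : EuclideanSpace ℝ (Fin n) →L[ℝ] ℝ) : EuclideanSpace ℝ (Fin n) →ₗ[ℝ] ℝ) := by
      rw [hW, Submodule.span_le]
      rintro _ ⟨⟨j, hj⟩, rfl⟩
      have hij : i ≠ j := fun h => absurd (h ▸ hi) (not_lt.2 hj)
      simpa [LinearMap.mem_ker] using C.orthonormal.2 hij
    simpa using hsub hxmem.2
  have hBx : a k * ‖x‖ ^ 2 ≤ ⟪x, A x⟫ := by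
    rw [quad_eq B A a hA, normsq_eq B, Finset.mul_sum]
    apply Finset.sum_le_sum
    intro i _
    by_cases hik : i ≤ k
    · exact mul_le_mul_of_nonneg_right (ha hik) (sq_nonneg _)
    · have h0 : B.repr x i = 0 := by
        rw [B.repr_apply_apply]; exact hBc i (lt_of_not_ge hik)
      simp [h0]
  have hCx : ⟪x, A' x⟫ ≤ b k * ‖x‖ ^ 2 := by
    rw [quad_eq C A' b hA', normsq_eq C, Finset.mul_sum]
    apply Finset.sum_le_sum
    intro i _
    by_cases hik : k ≤ i
    · exact mul_le_mul_of_nonneg_right (hb hik) (sq_nonneg _)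
    · have h0 : C.repr x i = 0 := by
        rw [C.repr_apply_apply]; exact hCc i (lt_of_not_ge hik)
      simp [h0]
  have key : ⟪x, A x⟫ - ⟪x, A' x⟫ ≤ ε * ‖x‖ ^ 2 := by
    have h := hε x
    rw [inner_sub_right] at h
    exact (le_abs_self _).trans h
  have hx2 : 0 < ‖x‖ ^ 2 := by
    have : ‖x‖ ≠ 0 := fun h => hx0 (norm_eq_zero.1 h)
    positivity
  nlinarith [hBx, hCx, key, hx2]

lemma onb_exists (hn : 0 < n) (f : Fin n → EuclideanSpace ℝ (Fin n)) (h : Orthonormal ℝ f) :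
    ∃ B : OrthonormalBasis (Fin n) ℝ (EuclideanSpace ℝ (Fin n)), ∀ i, B i = f i := by
  have : Nonempty (Fin n) := ⟨⟨0, hn⟩⟩
  have hcard : Fintype.card (Fin n) = Module.finrank ℝ (EuclideanSpace ℝ (Fin n)) := by
    rw [finrank_euclideanSpace_fin, Fintype.card_fin]
  let b := basisOfLinearIndependentOfCardEqFinrank h.linearIndependent hcard
  have hb : ⇑b = f := coe_basisOfLinearIndependentOfCardEqFinrank _ _
  have hsp : ⊤ ≤ Submodule.span ℝ (Set.range f) := by
    rw [← hb, b.span_eq]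
  exact ⟨OrthonormalBasis.mk h hsp, fun i => by rw [OrthonormalBasis.coe_mk]⟩

lemma sum_mulVec' {ι : Type*} (s : Finset ι) (A : ι → Matrix (Fin n) (Fin n) ℝ) (x : Fin n → ℝ) :
    (∑ i ∈ s, A i).mulVec x = ∑ i ∈ s, (A i).mulVec x := by
  classical
  induction s using Finset.induction_on with
  | empty => simp
  | insert _ _ hi ih => rw [Finset.sum_insert hi, Finset.sum_insert hi, Matrix.add_mulVec, ih]

lemma vecMulVec_mulVec' (a b x : Fin n → ℝ) :
    (Matrix.vecMulVec a b).mulVec x = (∑ l, b l * x l) • a := by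
  funext i
  simp only [Matrix.mulVec, Matrix.vecMulVec_apply, dotProduct, Pi.smul_apply,
    smul_eq_mul]
  rw [Finset.sum_mul]
  apply Finset.sum_congr rfl
  intro j _; ring

lemma vecMulVec_mul (a b : Fin n → ℝ) (M : Matrix (Fin n) (Fin n) ℝ) :
    Matrix.vecMulVec a b * M = Matrix.vecMulVec a (Matrix.vecMul b M) := by
  ext i l
  simp only [Matrix.mul_apply, Matrix.vecMulVec_apply, Matrix.vecMul, dotProduct,
    Finset.mul_sum]
  apply Finset.sum_congr rfl
  intro j _; ring

lemma vecMulVec_smul_right (a b : Fin n → ℝ) (c : ℝ) :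
    Matrix.vecMulVec a (c • b) = c • Matrix.vecMulVec a b := by
  ext i j
  simp [Matrix.vecMulVec_apply]
  ring

lemma complete_sum (u : Fin n → Fin n → ℝ)
    (horth : ∀ i j : Fin n, ∑ l, u i l * u j l = if i = j then 1 else 0) :
    ∑ i, Matrix.vecMulVec (u i) (u i) = 1 := by
  classical
  let U : Matrix (Fin n) (Fin n) ℝ := Matrix.of u
  have h1 : U * Uᵀ = 1 := by
    ext i j
    simpa [Matrix.mul_apply, U, Matrix.one_apply] using horth i j
  have h2 : Uᵀ * U = 1 := mul_eq_one_comm.mp h1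
  calc ∑ i, Matrix.vecMulVec (u i) (u i) = Uᵀ * U := by
        ext a c
        simp [Matrix.sum_apply, Matrix.mul_apply, Matrix.vecMulVec_apply, U]
    _ = 1 := h2

end EigenvectorPerturbationHelpers

set_option maxHeartbeats 1000000 in
/-- Theorem 2 of the paper: perturbation expansion of the `k`-th
eigenvector, with error bound of order `(2‖E‖₂/d_k)^{j+2}`. -/
theorem eigenvector_perturbation_expansion_bound
    {n : ℕ} (M E S : Matrix (Fin n) (Fin n) ℝ)
    (lam : Fin n → ℝ) (u : Fin n → Fin n → ℝ) (k : Fin n)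
    (muS : Fin n → ℝ) (w : Fin n → Fin n → ℝ)
    (lamS : ℝ) (v : Fin n → ℝ) (d : ℝ)
    (R Δ : Matrix (Fin n) (Fin n) ℝ)
    (hMsymm : M.IsSymm) (hEsymm : E.IsSymm) (hS : S = M + E)
    -- orthonormal eigenbasis of `M`, simple eigenvalues listed in decreasing order
    (horth : ∀ i j : Fin n, ∑ l, u i l * u j l = if i = j then 1 else 0)
    (heig : ∀ i, M.mulVec (u i) = lam i • u i)
    (hsorted : StrictAnti lam)
    -- `(muS k, v)` is the `k`-th eigenpair of `S`, `v` normalized by `vᵀ u_k = 1`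
    (horthS : ∀ i j : Fin n, ∑ l, w i l * w j l = if i = j then 1 else 0)
    (heigS : ∀ i, S.mulVec (w i) = muS i • w i)
    (hsortedS : Antitone muS)
    (hlamS : lamS = muS k)
    (hvpar : ∃ c : ℝ, v = c • w k)
    (hv : S.mulVec v = lamS • v)
    (hnormv : ∑ l, v l * u k l = 1)
    -- `R` is the reduced resolvent of `M` at `lam k` and `Δ = R (E - (λ_k(S) - λ_k) Id)`
    (hR : R = ∑ j ∈ Finset.univ.erase k,
      (lam j - lam k)⁻¹ • Matrix.vecMulVec (u j) (u j))
    (hΔ : Δ = R * (E - (lamS - lam k) • (1 : Matrix (Fin n) (Fin n) ℝ)))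
    -- `d` is the separation distance of `lam k`
    (hd : IsLeast {x : ℝ | ∃ j, j ≠ k ∧ x = |lam j - lam k|} d)
    (hE : matSpectralNorm E < d / 2) :
    ∀ j : ℕ,
      euclNorm (v - u k +
          ((∑ m ∈ Finset.range (j + 1), ((-1 : ℝ) ^ m) • Δ ^ m) * R * E).mulVec (u k)) ≤
        (1 / 2) * (2 * matSpectralNorm E / d) ^ (j + 2) *
          (1 - 2 * matSpectralNorm E / d)⁻¹ := by
  classical
  have hn : 0 < n := k.pos
  obtain ⟨⟨j0, hj0k, hdj0⟩, hlb⟩ := hd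
  have hlamne : ∀ i, i ≠ k → lam i ≠ lam k := fun i hi h => hi (hsorted.injective h)
  have hdpos : 0 < d := by
    rw [hdj0]; exact abs_pos.mpr (sub_ne_zero.mpr (hlamne j0 hj0k))
  have hdle : ∀ i, i ≠ k → d ≤ |lam i - lam k| := fun i hi => hlb ⟨i, hi, rfl⟩
  set ε := matSpectralNorm E with hεdef
  have hε0 : 0 ≤ ε := spec_nonneg E
  set q : ℝ := 2 * ε / d with hqdef
  have hq0 : 0 ≤ q := by positivity
  have hq1 : q < 1 := by rw [hqdef, div_lt_one hdpos]; linarith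
  -- orthonormal bases
  have honu : Orthonormal ℝ (fun i => toE (u i)) := by
    rw [orthonormal_iff_ite]
    intro i j
    rw [inner_toE]
    simpa using horth i j
  obtain ⟨Bu, hBu⟩ := onb_exists hn _ honu
  have honw : Orthonormal ℝ (fun i => toE (w i)) := by
    rw [orthonormal_iff_ite]
    intro i j
    rw [inner_toE]
    simpa using horthS i j
  obtain ⟨Bw, hBw⟩ := onb_exists hn _ honw
  -- Weyl's inequality
  have hMeig : ∀ i, Matrix.toEuclideanLin M (Bu i) = lam i • Bu i := by
    intro i; rw [hBu, ← toE_mulVec, heig, toE_smul]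
  have hSeig : ∀ i, Matrix.toEuclideanLin S (Bw i) = muS i • Bw i := by
    intro i; rw [hBw, ← toE_mulVec, heigS, toE_smul]
  have hdiff : ∀ x : EuclideanSpace ℝ (Fin n),
      Matrix.toEuclideanLin S x - Matrix.toEuclideanLin M x = Matrix.toEuclideanLin E x := by
    intro x; rw [hS, map_add, LinearMap.add_apply]; abel
  have hbound : ∀ x : EuclideanSpace ℝ (Fin n),
      |⟪x, Matrix.toEuclideanLin E x⟫| ≤ ε * ‖x‖ ^ 2 := by
    intro x
    calc |⟪x, Matrix.toEuclideanLin E x⟫| ≤ ‖x‖ * ‖Matrix.toEuclideanLin E x‖ :=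
          abs_real_inner_le_norm _ _
      _ ≤ ‖x‖ * (ε * ‖x‖) :=
          mul_le_mul_of_nonneg_left (norm_toEuclideanLin_le E x) (norm_nonneg x)
      _ = ε * ‖x‖ ^ 2 := by ring
  have hw1 : muS k ≤ lam k + ε :=
    weyl_aux Bw Bu (Matrix.toEuclideanLin S) (Matrix.toEuclideanLin M) muS lam k hSeig hMeig
      hsortedS hsorted.antitone ε (fun x => by rw [hdiff x]; exact hbound x)
  have hw2 : lam k ≤ muS k + ε :=
    weyl_aux Bu Bw (Matrix.toEuclideanLin M) (Matrix.toEuclideanLin S) lam muS k hMeig hSeig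
      hsorted.antitone hsortedS ε (fun x => by
        have hneg : Matrix.toEuclideanLin M x - Matrix.toEuclideanLin S x
            = -(Matrix.toEuclideanLin E x) := by
          rw [← hdiff x]; abel
        rw [hneg, inner_neg_right, abs_neg]; exact hbound x)
  have hδbound : |lamS - lam k| ≤ ε := by
    rw [hlamS, abs_le]; constructor <;> linarith
  -- spectral norm of R
  have hRx : ∀ x : Fin n → ℝ, ‖toE (R.mulVec x)‖ ≤ d⁻¹ * ‖toE x‖ := by
    intro x
    set g : Fin n → ℝ :=
      fun i => if i = k then 0 else (lam i - lam k)⁻¹ * ∑ l, u i l * x l with hg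
    have hterm : ∀ i ∈ Finset.univ.erase k,
        toE (((lam i - lam k)⁻¹ • Matrix.vecMulVec (u i) (u i)).mulVec x) = g i • Bu i := by
      intro i hi
      rw [Matrix.smul_mulVec, vecMulVec_mulVec', toE_smul, toE_smul, ← hBu, smul_smul]
      rw [hg]
      simp [(Finset.mem_erase.mp hi).1]
    have hRxe : toE (R.mulVec x) = ∑ i, g i • Bu i := by
      rw [hR, sum_mulVec', toE_sum, Finset.sum_congr rfl hterm]
      apply Finset.sum_subset (Finset.subset_univ _)
      intro i _ hi
      have hik : i = k := by simpa using hi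
      rw [hik, hg]; simp
    have hg2 : ∀ i, g i ^ 2 ≤ d⁻¹ ^ 2 * (∑ l, u i l * x l) ^ 2 := by
      intro i
      by_cases hik : i = k
      · rw [hg]; simp [hik]; positivity
      · rw [hg]; simp only [hik, if_false]
        rw [mul_pow]
        apply mul_le_mul_of_nonneg_right _ (sq_nonneg _)
        rw [← sq_abs ((lam i - lam k)⁻¹), abs_inv]
        have h1 : d ≤ |lam i - lam k| := hdle i hik
        have h2 : |lam i - lam k|⁻¹ ≤ d⁻¹ := inv_anti₀ hdpos h1
        have h3 : (0:ℝ) ≤ |lam i - lam k|⁻¹ := by positivity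
        exact pow_le_pow_left₀ h3 h2 2
    have hreprx : ∀ i, Bu.repr (toE x) i = ∑ l, u i l * x l := by
      intro i
      rw [Bu.repr_apply_apply, hBu, inner_toE]
    have hsq : ‖toE (R.mulVec x)‖ ^ 2 ≤ (d⁻¹ * ‖toE x‖) ^ 2 := by
      rw [hRxe, normsq_eq Bu]
      calc ∑ i, Bu.repr (∑ j, g j • Bu j) i ^ 2 = ∑ i, g i ^ 2 := by
            apply Finset.sum_congr rfl; intro i _; rw [repr_sum]
        _ ≤ ∑ i, d⁻¹ ^ 2 * (∑ l, u i l * x l) ^ 2 := Finset.sum_le_sum fun i _ => hg2 i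
        _ = d⁻¹ ^ 2 * ∑ i, Bu.repr (toE x) i ^ 2 := by
            rw [Finset.mul_sum]
            apply Finset.sum_congr rfl; intro i _; rw [hreprx i]
        _ = (d⁻¹ * ‖toE x‖) ^ 2 := by rw [← normsq_eq Bu]; ring
    have h1 : (0:ℝ) ≤ d⁻¹ * ‖toE x‖ := by positivity
    nlinarith [norm_nonneg (toE (R.mulVec x))]
  have hspecR : matSpectralNorm R ≤ d⁻¹ := spec_le_of _ _ (by positivity) hRx
  -- spectral norm of Δ
  have hδ1 : matSpectralNorm (E - (lamS - lam k) • (1 : Matrix (Fin n) (Fin n) ℝ)) ≤ 2 * ε := by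
    have h1 : E - (lamS - lam k) • (1 : Matrix (Fin n) (Fin n) ℝ)
        = E + (-(lamS - lam k)) • (1 : Matrix (Fin n) (Fin n) ℝ) := by
      rw [neg_smul, ← sub_eq_add_neg]
    rw [h1]
    refine (spec_add _ _).trans ?_
    rw [spec_smul, abs_neg]
    have h2 : |lamS - lam k| * matSpectralNorm (1 : Matrix (Fin n) (Fin n) ℝ) ≤ |lamS - lam k| := by
      nlinarith [spec_one (n := n), spec_nonneg (1 : Matrix (Fin n) (Fin n) ℝ),
        abs_nonneg (lamS - lam k)]
    have h3 : |lamS - lam k| ≤ ε := hδbound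
    linarith
  have hspecΔ : matSpectralNorm Δ ≤ q := by
    rw [hΔ]
    refine (spec_mul _ _).trans ?_
    calc matSpectralNorm R * matSpectralNorm (E - (lamS - lam k) • (1 : Matrix (Fin n) (Fin n) ℝ))
        ≤ d⁻¹ * (2 * ε) := by
          apply mul_le_mul hspecR hδ1 (spec_nonneg _) (by positivity)
      _ = q := by rw [hqdef, div_eq_mul_inv]; ring
  -- key vector identities
  have hMvec : M.mulVec v = lamS • v - E.mulVec v := by
    have h := hv
    rw [hS, Matrix.add_mulVec] at h
    exact eq_sub_of_add_eq h
  have hkey : R * M - lam k • R = 1 - Matrix.vecMulVec (u k) (u k) := by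
    have hRM : R * M = ∑ i ∈ Finset.univ.erase k,
        ((lam i - lam k)⁻¹ * lam i) • Matrix.vecMulVec (u i) (u i) := by
      rw [hR, Finset.sum_mul]
      apply Finset.sum_congr rfl
      intro i _
      rw [Matrix.smul_mul, vecMulVec_mul]
      have hvm : Matrix.vecMul (u i) M = lam i • u i := by
        conv_lhs => rw [← hMsymm]
        rw [Matrix.vecMul_transpose, heig i]
      rw [hvm, vecMulVec_smul_right, smul_smul]
    have hlkR : lam k • R = ∑ i ∈ Finset.univ.erase k,
        ((lam i - lam k)⁻¹ * lam k) • Matrix.vecMulVec (u i) (u i) := by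
      rw [hR, Finset.smul_sum]
      apply Finset.sum_congr rfl
      intro i _
      rw [smul_smul, mul_comm]
    rw [hRM, hlkR, ← Finset.sum_sub_distrib]
    have hterm : ∀ i ∈ Finset.univ.erase k,
        ((lam i - lam k)⁻¹ * lam i) • Matrix.vecMulVec (u i) (u i)
          - ((lam i - lam k)⁻¹ * lam k) • Matrix.vecMulVec (u i) (u i)
        = Matrix.vecMulVec (u i) (u i) := by
      intro i hi
      rw [← sub_smul]
      have h1 : (lam i - lam k)⁻¹ * lam i - (lam i - lam k)⁻¹ * lam k = 1 := by
        rw [← mul_sub]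
        exact inv_mul_cancel₀ (sub_ne_zero.mpr (hlamne i (Finset.mem_erase.mp hi).1))
      rw [h1, one_smul]
    rw [Finset.sum_congr rfl hterm]
    have hc := complete_sum u horth
    have hsplit : ∑ i ∈ Finset.univ.erase k, Matrix.vecMulVec (u i) (u i)
        = (∑ i, Matrix.vecMulVec (u i) (u i)) - Matrix.vecMulVec (u k) (u k) :=
      eq_sub_of_add_eq (Finset.sum_erase_add _ _ (Finset.mem_univ k))
    rw [hsplit, hc]
  have hid1 : v - u k = -(Δ.mulVec v) := by
    have h1 : (R * M - lam k • R).mulVec v = v - u k := by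
      rw [hkey, Matrix.sub_mulVec, Matrix.one_mulVec, vecMulVec_mulVec']
      have h2 : (∑ l, u k l * v l) = 1 := by
        rw [← hnormv]
        apply Finset.sum_congr rfl; intro l _; rw [mul_comm]
      rw [h2, one_smul]
    have h3 : (R * M - lam k • R).mulVec v = -(Δ.mulVec v) := by
      rw [Matrix.sub_mulVec, ← Matrix.mulVec_mulVec, hMvec, Matrix.mulVec_sub,
        Matrix.mulVec_smul, Matrix.smul_mulVec]
      rw [hΔ, ← Matrix.mulVec_mulVec, Matrix.sub_mulVec, Matrix.smul_mulVec,
        Matrix.one_mulVec, Matrix.mulVec_sub, Matrix.mulVec_smul, sub_smul]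
      abel
    rw [← h1, h3]
  have hRuk : R.mulVec (u k) = 0 := by
    rw [hR, sum_mulVec']
    apply Finset.sum_eq_zero
    intro i hi
    rw [Matrix.smul_mulVec, vecMulVec_mulVec']
    have h0 : (∑ l, u i l * u k l) = 0 := by
      rw [horth i k]; simp [(Finset.mem_erase.mp hi).1]
    rw [h0, zero_smul, smul_zero]
  have hΔuk : Δ.mulVec (u k) = (R * E).mulVec (u k) := by
    rw [hΔ, ← Matrix.mulVec_mulVec, Matrix.sub_mulVec, Matrix.smul_mulVec,
      Matrix.one_mulVec, Matrix.mulVec_sub, Matrix.mulVec_smul, hRuk, smul_zero, sub_zero,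
      Matrix.mulVec_mulVec]
  have hREu : (R * E).mulVec (u k) = -(v - u k) - Δ.mulVec (v - u k) := by
    rw [← hΔuk]
    have hΔv : Δ.mulVec v = -(v - u k) := by rw [hid1, neg_neg]
    have harg : u k = v - (v - u k) := by abel
    have hsplit : Δ.mulVec (u k) = Δ.mulVec v - Δ.mulVec (v - u k) := by
      conv_lhs => rw [harg]
      exact Matrix.mulVec_sub Δ v (v - u k)
    rw [hsplit, hΔv]
  -- the expansion identity
  have hiter : ∀ j : ℕ,
      v - u k + ((∑ m ∈ Finset.range (j + 1), ((-1 : ℝ) ^ m) • Δ ^ m) * R * E).mulVec (u k)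
      = ((-1 : ℝ) ^ (j + 1)) • (Δ ^ (j + 1)).mulVec (v - u k) := by
    intro j
    induction j with
    | zero =>
      rw [Finset.sum_range_one, pow_zero, pow_one, one_smul, pow_zero, one_mul, pow_one]
      rw [hREu]
      rw [neg_one_smul]
      abel
    | succ j ih =>
      rw [Finset.sum_range_succ, add_mul, add_mul, Matrix.add_mulVec, ← add_assoc, ih]
      have e2 : ((((-1 : ℝ) ^ (j + 1)) • Δ ^ (j + 1)) * R * E).mulVec (u k)
          = ((-1 : ℝ) ^ (j + 1)) • (Δ ^ (j + 1)).mulVec ((R * E).mulVec (u k)) := by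
        rw [Matrix.smul_mul, Matrix.smul_mul, Matrix.smul_mulVec, mul_assoc,
          ← Matrix.mulVec_mulVec]
      have e3 : (Δ ^ (j + 1)).mulVec ((R * E).mulVec (u k))
          = -((Δ ^ (j + 1)).mulVec (v - u k)) - (Δ ^ (j + 1 + 1)).mulVec (v - u k) := by
        rw [hREu, Matrix.mulVec_sub, Matrix.mulVec_neg, Matrix.mulVec_mulVec, ← pow_succ]
      rw [e2, e3]
      rw [pow_succ ((-1 : ℝ)) (j + 1)]
      set X := (Δ ^ (j + 1)).mulVec (v - u k)
      set Y := (Δ ^ (j + 1 + 1)).mulVec (v - u k)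
      set c := ((-1 : ℝ)) ^ (j + 1)
      rw [smul_sub, smul_neg, ← smul_smul, smul_comm c (-1 : ℝ) Y, neg_one_smul]
      abel
  -- norm bounds
  have hukn : ‖toE (u k)‖ = 1 := by
    have h2 : ‖toE (u k)‖ ^ 2 = 1 := by
      rw [← real_inner_self_eq_norm_sq, inner_toE]
      simpa using horth k k
    nlinarith [norm_nonneg (toE (u k))]
  have hREn : ‖toE ((R * E).mulVec (u k))‖ ≤ ε / d := by
    refine (norm_mulVec_le _ _).trans ?_
    rw [hukn, mul_one]
    calc matSpectralNorm (R * E) ≤ matSpectralNorm R * matSpectralNorm E := spec_mul _ _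
      _ ≤ d⁻¹ * ε := by
          apply mul_le_mul hspecR le_rfl hε0 (by positivity)
      _ = ε / d := by rw [div_eq_mul_inv]; ring
  have hh : ‖toE (v - u k)‖ ≤ (ε / d) * (1 - q)⁻¹ := by
    have h1 : ‖toE (v - u k)‖ ≤ ε / d + q * ‖toE (v - u k)‖ := by
      have hEq : v - u k = -((R * E).mulVec (u k)) - Δ.mulVec (v - u k) := by
        rw [hREu]; abel
      calc ‖toE (v - u k)‖
          = ‖toE (-((R * E).mulVec (u k)) - Δ.mulVec (v - u k))‖ := by rw [← hEq]
        _ ≤ ‖toE (-((R * E).mulVec (u k)))‖ + ‖toE (Δ.mulVec (v - u k))‖ := by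
            rw [toE_sub]; exact norm_sub_le _ _
        _ ≤ ε / d + q * ‖toE (v - u k)‖ := by
            apply add_le_add
            · rw [toE_neg, norm_neg]; exact hREn
            · exact (norm_mulVec_le _ _).trans
                (mul_le_mul_of_nonneg_right hspecΔ (norm_nonneg _))
    have h3 : 0 < 1 - q := by linarith
    have h2 : ‖toE (v - u k)‖ * (1 - q) ≤ ε / d := by nlinarith
    calc ‖toE (v - u k)‖ = ‖toE (v - u k)‖ * (1 - q) * (1 - q)⁻¹ := by
          rw [mul_assoc, mul_inv_cancel₀ (ne_of_gt h3), mul_one]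
      _ ≤ (ε / d) * (1 - q)⁻¹ := by
          apply mul_le_mul_of_nonneg_right h2 (by positivity)
  -- conclusion
  intro j
  rw [euclNorm_eq, hiter j, toE_smul, norm_smul]
  have hone : ‖((-1 : ℝ)) ^ (j + 1)‖ = 1 := by
    rw [norm_pow, norm_neg, norm_one, one_pow]
  rw [hone, one_mul]
  have hεd : ε / d = q / 2 := by rw [hqdef]; ring
  calc ‖toE ((Δ ^ (j + 1)).mulVec (v - u k))‖
      ≤ matSpectralNorm (Δ ^ (j + 1)) * ‖toE (v - u k)‖ := norm_mulVec_le _ _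
    _ ≤ q ^ (j + 1) * ((ε / d) * (1 - q)⁻¹) := by
        apply mul_le_mul _ hh (norm_nonneg _) (by positivity)
        exact (spec_pow _ _).trans (pow_le_pow_left₀ (spec_nonneg _) hspecΔ _)
    _ = (1 / 2) * q ^ (j + 2) * (1 - q)⁻¹ := by
        rw [hεd, show j + 2 = (j + 1) + 1 from rfl, pow_succ]
        ring
end

section
/- Let M be an n×n symmetric matrix with eigenvalues λ₁ > λ₂ > … and unit leading eigenvector u₁, let E be the subsampling residual of M with sampling probability p, and let R = Σ_{j≥2} (λ_j − λ₁)^{-1} u_j u_j^T be the reduced resolvent at λ₁. Set w₁ = u₁ ∘ u₁ and 𝓜 = M ∘ M (entrywise squares). Then E[‖R E u₁‖₂²] ≤ (1/(λ₂−λ₁)²) · ((1−p)/p) · ( Σ_{k=1}^n u₁(k)² ‖M_k‖₂² − [ 2 w₁^T 𝓜 w₁ − Σ_{k=1}^n w₁(k)² 𝓜_{kk} ] ), where M_k denotes the k-th column of M. -/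
open MeasureTheory ProbabilityTheory Filter Matrix
open scoped ENNReal NNReal BigOperators

/-- The spectral norm (largest singular value) of a real matrix, i.e. the operator norm
of the induced map between Euclidean spaces. -/
noncomputable def spectralNorm' {m n : Type*} [Fintype m] [Fintype n] [DecidableEq n]
    (A : Matrix m n ℝ) : ℝ :=
  ‖LinearMap.toContinuousLinearMap (Matrix.toEuclideanLin A)‖

section aux
variable {n : ℕ}

def op (i j : Fin n) : Fin n × Fin n := if i ≤ j then (i, j) else (j, i)

lemma op_le (i j : Fin n) : (op i j).1 ≤ (op i j).2 := by
  unfold op; split_ifs with h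
  · exact h
  · exact le_of_not_ge h

lemma op_eq_iff (i j k l : Fin n) :
    op i j = op k l ↔ (i = k ∧ j = l) ∨ (i = l ∧ j = k) := by
  unfold op
  split_ifs with h1 h2 h2 <;>
    simp only [Prod.mk.injEq, Fin.ext_iff, Fin.le_def, not_le] at * <;> omega

lemma op_right_cancel (k l l' : Fin n) : op k l = op k l' ↔ l = l' := by
  rw [op_eq_iff]
  constructor
  · rintro (⟨-, h⟩ | ⟨h1, h2⟩)
    · exact h
    · exact h2.trans h1
  · intro h; exact Or.inl ⟨rfl, h⟩

lemma op_symm_apply (i j : Fin n) {A : Matrix (Fin n) (Fin n) ℝ} (hA : A.IsSymm) :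
    A (op i j).1 (op i j).2 = A i j := by
  unfold op; split_ifs with h
  · rfl
  · exact hA.apply i j

lemma sum_delta2 (k l : Fin n) (t : Fin n → Fin n → ℝ) :
    ∑ k', ∑ l', t k' l' * (if k' = k ∧ l' = l then 1 else 0) = t k l := by
  simp [mul_ite, ite_and, Finset.sum_ite_eq]

lemma sum_op_collapse (k l : Fin n) (t : Fin n → Fin n → ℝ) :
    ∑ k', ∑ l', t k' l' * (if op k' l' = op k l then (1:ℝ) else 0)
      = t k l + t l k - (if k = l then t k l else 0) := by
  have key : ∀ k' l' : Fin n, (if op k' l' = op k l then (1:ℝ) else 0)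
      = (if k' = k ∧ l' = l then 1 else 0) + (if k' = l ∧ l' = k then 1 else 0)
        - (if k' = k ∧ l' = l ∧ k = l then 1 else 0) := by
    intro k' l'
    simp only [op_eq_iff]
    split_ifs <;> simp only [Fin.ext_iff] at * <;> first | omega | norm_num
  have : ∀ k' l' : Fin n, t k' l' * (if op k' l' = op k l then (1:ℝ) else 0)
      = t k' l' * (if k' = k ∧ l' = l then 1 else 0)
        + t k' l' * (if k' = l ∧ l' = k then 1 else 0)
        - t k' l' * (if k' = k ∧ l' = l ∧ k = l then 1 else 0) := by
    intro k' l'; rw [key]; ring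
  simp only [this, Finset.sum_sub_distrib, Finset.sum_add_distrib]
  rw [sum_delta2, sum_delta2]
  congr 1
  by_cases hkl : k = l
  · subst hkl; simp [ite_and, Finset.sum_ite_eq]
  · simp only [hkl, and_false, if_false, mul_zero, Finset.sum_const_zero, if_neg hkl]

lemma col_orthonormal (u : Fin n → Fin n → ℝ)
    (hon : ∀ i j, (∑ k, u i k * u j k) = if i = j then (1:ℝ) else 0) :
    ∀ k k', (∑ j, u j k * u j k') = if k = k' then (1:ℝ) else 0 := by
  have hU : (Matrix.of u) * (Matrix.of u)ᵀ = 1 := by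
    ext i j
    simp only [Matrix.mul_apply, Matrix.transpose_apply, Matrix.of_apply, Matrix.one_apply]
    exact hon i j
  have hU2 : (Matrix.of u)ᵀ * (Matrix.of u) = 1 := mul_eq_one_comm.mp hU
  intro k k'
  have := congrFun (congrFun hU2 k) k'
  simpa [Matrix.mul_apply, Matrix.transpose_apply, Matrix.of_apply, Matrix.one_apply] using this

lemma parseval (u : Fin n → Fin n → ℝ)
    (hon : ∀ i j, (∑ k, u i k * u j k) = if i = j then (1:ℝ) else 0)
    (x : Fin n → ℝ) :
    ∑ j, (∑ m, u j m * x m) ^ 2 = ∑ k, x k ^ 2 := by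
  have hcol := col_orthonormal u hon
  calc ∑ j, (∑ m, u j m * x m) ^ 2
      = ∑ j, ∑ m, ∑ m', (u j m * x m) * (u j m' * x m') := by
        refine Finset.sum_congr rfl fun j _ => ?_
        rw [sq, Finset.sum_mul_sum]
    _ = ∑ m, ∑ m', (x m * x m') * ∑ j, u j m * u j m' := by
        rw [Finset.sum_comm]
        refine Finset.sum_congr rfl fun m _ => ?_
        rw [Finset.sum_comm]
        refine Finset.sum_congr rfl fun m' _ => ?_
        rw [Finset.mul_sum]
        exact Finset.sum_congr rfl fun j _ => by ring
    _ = ∑ k, x k ^ 2 := by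
        simp only [hcol, mul_ite, mul_one, mul_zero]
        simp [Finset.sum_ite_eq, sq]

lemma Rvec_bound (lam : Fin n → ℝ) (u : Fin n → Fin n → ℝ)
    (hon : ∀ i j, (∑ k, u i k * u j k) = if i = j then (1:ℝ) else 0)
    (hsorted : StrictAnti lam) (z o : Fin n) (hz : (z : ℕ) = 0) (ho : (o : ℕ) = 1)
    (x : Fin n → ℝ) :
    ∑ k, ((∑ j ∈ Finset.univ.erase z,
        (lam j - lam z)⁻¹ • Matrix.vecMulVec (u j) (u j)).mulVec x k) ^ 2
      ≤ ((lam o - lam z) ^ 2)⁻¹ * ((∑ k, x k ^ 2) - (∑ m, u z m * x m) ^ 2) := by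
  set T := Finset.univ.erase z with hT
  set β : Fin n → ℝ := fun j => (lam j - lam z)⁻¹ * (∑ m, u j m * x m) with hβ
  have hvec : ∀ k, (∑ j ∈ T, (lam j - lam z)⁻¹ • Matrix.vecMulVec (u j) (u j)).mulVec x k
      = ∑ j ∈ T, β j * u j k := by
    intro k
    simp only [Matrix.mulVec, dotProduct, Matrix.sum_apply, Matrix.smul_apply,
      Matrix.vecMulVec_apply, smul_eq_mul, Finset.sum_mul]
    rw [Finset.sum_comm]
    refine Finset.sum_congr rfl fun j _ => ?_
    simp only [hβ, Finset.sum_mul, Finset.mul_sum]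
    exact Finset.sum_congr rfl fun m _ => by ring
  have hsum : ∑ k, (∑ j ∈ T, β j * u j k) ^ 2 = ∑ j ∈ T, β j ^ 2 := by
    calc ∑ k, (∑ j ∈ T, β j * u j k) ^ 2
        = ∑ k, ∑ j ∈ T, ∑ j' ∈ T, (β j * u j k) * (β j' * u j' k) := by
          refine Finset.sum_congr rfl fun k _ => ?_
          rw [sq, Finset.sum_mul_sum]
      _ = ∑ j ∈ T, ∑ j' ∈ T, (β j * β j') * ∑ k, u j k * u j' k := by
          rw [Finset.sum_comm]
          refine Finset.sum_congr rfl fun j _ => ?_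
          rw [Finset.sum_comm]
          refine Finset.sum_congr rfl fun j' _ => ?_
          rw [Finset.mul_sum]
          exact Finset.sum_congr rfl fun k _ => by ring
      _ = ∑ j ∈ T, β j ^ 2 := by
          simp only [hon, mul_ite, mul_one, mul_zero, Finset.sum_ite_eq]
          refine Finset.sum_congr rfl fun j hj => ?_
          simp [hj, sq]
  have hβle : ∀ j ∈ T, β j ^ 2 ≤ ((lam o - lam z) ^ 2)⁻¹ * (∑ m, u j m * x m) ^ 2 := by
    intro j hj
    have hjz : j ≠ z := Finset.ne_of_mem_erase hj
    have hozlt : z < o := by rw [Fin.lt_def, hz, ho]; omega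
    have hjo : o ≤ j := by
      rw [Fin.le_def, ho]
      have : (j : ℕ) ≠ 0 := fun h => hjz (Fin.ext (h.trans hz.symm))
      omega
    have h1 : lam j ≤ lam o := hsorted.antitone hjo
    have h2 : lam o < lam z := hsorted hozlt
    have hsq : (lam o - lam z) ^ 2 ≤ (lam j - lam z) ^ 2 := by nlinarith
    have hne : lam o - lam z ≠ 0 := by linarith
    have hpos : (0:ℝ) < (lam o - lam z) ^ 2 := pow_two_pos_of_ne_zero hne
    have := inv_anti₀ hpos hsq
    calc β j ^ 2 = ((lam j - lam z) ^ 2)⁻¹ * (∑ m, u j m * x m) ^ 2 := by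
          rw [hβ]; simp [mul_pow, ← inv_pow]
      _ ≤ ((lam o - lam z) ^ 2)⁻¹ * (∑ m, u j m * x m) ^ 2 := by
          apply mul_le_mul_of_nonneg_right this (by positivity)
  calc ∑ k, ((∑ j ∈ T, (lam j - lam z)⁻¹ • Matrix.vecMulVec (u j) (u j)).mulVec x k) ^ 2
      = ∑ j ∈ T, β j ^ 2 := by rw [Finset.sum_congr rfl fun k _ => by rw [hvec k], hsum]
    _ ≤ ∑ j ∈ T, ((lam o - lam z) ^ 2)⁻¹ * (∑ m, u j m * x m) ^ 2 :=
        Finset.sum_le_sum hβle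
    _ = ((lam o - lam z) ^ 2)⁻¹ * ∑ j ∈ T, (∑ m, u j m * x m) ^ 2 := by
        rw [Finset.mul_sum]
    _ = ((lam o - lam z) ^ 2)⁻¹ * ((∑ k, x k ^ 2) - (∑ m, u z m * x m) ^ 2) := by
        congr 1
        have := parseval u hon x
        have hsplit : (∑ m, u z m * x m) ^ 2 + ∑ j ∈ T, (∑ m, u j m * x m) ^ 2
            = ∑ j, (∑ m, u j m * x m) ^ 2 :=
          Finset.add_sum_erase _ (fun j => (∑ m, u j m * x m) ^ 2) (Finset.mem_univ z)
        linarith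

end aux

lemma twopoint_ae {Ω : Type*} [MeasurableSpace Ω] (P : Measure Ω) [IsProbabilityMeasure P]
    {X : Ω → ℝ} (hX : Measurable X) {a b p : ℝ} (hab : a ≠ b)
    (hp0 : 0 ≤ p) (hp1 : p ≤ 1)
    (ha : P {ω | X ω = a} = ENNReal.ofReal p) (hb : P {ω | X ω = b} = ENNReal.ofReal (1 - p)) :
    ∀ᵐ ω ∂P, X ω = a ∨ X ω = b := by
  have hma : MeasurableSet {ω | X ω = a} := hX (measurableSet_singleton a)
  have hmb : MeasurableSet {ω | X ω = b} := hX (measurableSet_singleton b)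
  have hdisj : Disjoint {ω | X ω = a} {ω | X ω = b} := by
    rw [Set.disjoint_left]
    intro ω h1 h2
    exact hab (h1.symm.trans h2)
  have h : P ({ω | X ω = a} ∪ {ω | X ω = b}) = 1 := by
    rw [measure_union hdisj hmb, ha, hb, ← ENNReal.ofReal_add hp0 (by linarith)]
    norm_num
  have h0 : P ({ω | X ω = a} ∪ {ω | X ω = b})ᶜ = 0 :=
    (prob_compl_eq_zero_iff (hma.union hmb)).mpr h
  filter_upwards [measure_eq_zero_iff_ae_notMem.mp h0] with ω hω
  simpa [Set.mem_union] using not_not.mp (by simpa using hω)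

lemma twopoint_integral {Ω : Type*} [MeasurableSpace Ω] (P : Measure Ω) [IsProbabilityMeasure P]
    {X : Ω → ℝ} (hX : Measurable X) {a b p : ℝ} (hab : a ≠ b)
    (hp0 : 0 ≤ p) (hp1 : p ≤ 1)
    (ha : P {ω | X ω = a} = ENNReal.ofReal p) (hb : P {ω | X ω = b} = ENNReal.ofReal (1 - p))
    (f : ℝ → ℝ) :
    ∫ ω, f (X ω) ∂P = f a * p + f b * (1 - p) := by
  have hma : MeasurableSet {ω | X ω = a} := hX (measurableSet_singleton a)
  have hmb : MeasurableSet {ω | X ω = b} := hX (measurableSet_singleton b)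
  have hcong : (fun ω => f (X ω)) =ᵐ[P]
      (fun ω => {ω | X ω = a}.indicator (fun _ => f a) ω
        + {ω | X ω = b}.indicator (fun _ => f b) ω) := by
    filter_upwards [twopoint_ae P hX hab hp0 hp1 ha hb] with ω hω
    rcases hω with h | h
    · have hnb : ω ∉ {ω | X ω = b} := by simp [Set.mem_setOf_eq, h, hab]
      simp [Set.indicator_of_mem, Set.indicator_of_notMem, h, hnb, Set.mem_setOf_eq]
    · have hna : ω ∉ {ω | X ω = a} := by
        simp only [Set.mem_setOf_eq, h]; exact fun hh => hab hh.symm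
      simp [Set.indicator_of_mem, Set.indicator_of_notMem, h, hna, Set.mem_setOf_eq]
  rw [integral_congr_ae hcong, integral_add
      ((integrable_const (f a)).indicator hma) ((integrable_const (f b)).indicator hmb),
    integral_indicator_const _ hma, integral_indicator_const _ hmb, measureReal_def, measureReal_def, ha, hb,
    ENNReal.toReal_ofReal hp0, ENNReal.toReal_ofReal (by linarith)]
  simp [mul_comm]

/-- Theorem 4 of the paper, first bound: variance bound for the
first-order residual `R E u₁`. -/
theorem variance_REu_bound
    {Ω : Type*} [MeasurableSpace Ω] (P : Measure Ω) [IsProbabilityMeasure P]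
    {n : ℕ} (hn : 2 ≤ n)
    (M : Matrix (Fin n) (Fin n) ℝ) (lam : Fin n → ℝ) (u : Fin n → Fin n → ℝ)
    (p : ℝ) (E : Ω → Matrix (Fin n) (Fin n) ℝ)
    (u1 : Fin n → ℝ) (lam1 lam2 : ℝ) (R : Matrix (Fin n) (Fin n) ℝ)
    (hsymm : M.IsSymm)
    (hdecomp : M = ∑ i, lam i • Matrix.vecMulVec (u i) (u i))
    (hunit : ∀ i, euclNorm (u i) = 1)
    (horth : ∀ i j : Fin n, i ≠ j → ∑ k, u i k * u j k = 0)
    (hsorted : StrictAnti lam)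
    (hu1 : u1 = u ⟨0, by omega⟩)
    (hlam1 : lam1 = lam ⟨0, by omega⟩) (hlam2 : lam2 = lam ⟨1, by omega⟩)
    (hR : R = ∑ j ∈ Finset.univ.erase (⟨0, by omega⟩ : Fin n),
      (lam j - lam1)⁻¹ • Matrix.vecMulVec (u j) (u j))
    (hp0 : 0 < p) (hp1 : p < 1)
    (hE : IsSubsampleResidual P p M E) :
    (∫ ω, (euclNorm ((R * E ω).mulVec u1)) ^ 2 ∂P) ≤
      (1 / (lam2 - lam1) ^ 2) * ((1 - p) / p) *
        ((∑ k, (u1 k) ^ 2 * ∑ i, (M i k) ^ 2) -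
          (2 * (∑ i, ∑ j, (u1 i) ^ 2 * (M i j) ^ 2 * (u1 j) ^ 2) -
            ∑ k, ((u1 k) ^ 2) ^ 2 * (M k k) ^ 2)) := by
  obtain ⟨C, ⟨hCsymm, hCmeas, hCindep, hCdist⟩, hEeq⟩ := hE
  set a : ℝ := Real.sqrt ((1 - p) / p) with ha_def
  set b : ℝ := -Real.sqrt (p / (1 - p)) with hb_def
  -- square-root facts
  set sp : ℝ := Real.sqrt p with hsp
  set s1 : ℝ := Real.sqrt (1 - p) with hs1
  have hsp_pos : 0 < sp := Real.sqrt_pos.mpr hp0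
  have hs1_pos : 0 < s1 := Real.sqrt_pos.mpr (by linarith)
  have hsp_sq : sp ^ 2 = p := Real.sq_sqrt hp0.le
  have hs1_sq : s1 ^ 2 = 1 - p := Real.sq_sqrt (by linarith)
  have ha_eq : a = s1 / sp := by rw [ha_def, hs1, hsp, Real.sqrt_div (by linarith : (0:ℝ) ≤ 1 - p)]
  have hb_eq : b = -(sp / s1) := by rw [hb_def, hsp, hs1, Real.sqrt_div hp0.le]
  have ha_pos : 0 < a := by rw [ha_eq]; positivity
  have hb_neg : b < 0 := by rw [hb_eq]; simp; positivity
  have hab : a ≠ b := by linarith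
  -- moments
  have hm1 : ∀ i j : Fin n, i ≤ j → ∫ ω, C ω i j ∂P = 0 := by
    intro i j hij
    have := twopoint_integral P (hCmeas i j) hab hp0.le hp1.le
      (hCdist i j hij).1 (hCdist i j hij).2 id
    simp only [id] at this
    rw [this, ha_eq, hb_eq]
    field_simp
    linear_combination p * hs1_sq - (1 - p) * hsp_sq
  have hm2 : ∀ i j : Fin n, i ≤ j → ∫ ω, C ω i j * C ω i j ∂P = 1 := by
    intro i j hij
    have := twopoint_integral P (hCmeas i j) hab hp0.le hp1.le
      (hCdist i j hij).1 (hCdist i j hij).2 (fun x => x * x)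
    rw [this, ha_eq, hb_eq]
    have h1 : s1 / sp * (s1 / sp) * p = 1 - p := by
      rw [div_mul_div_comm, ← sq, ← sq, hsp_sq, hs1_sq, div_mul_cancel₀ _ (ne_of_gt hp0)]
    have h2 : -(sp / s1) * -(sp / s1) * (1 - p) = p := by
      rw [neg_mul_neg, div_mul_div_comm, ← sq, ← sq, hsp_sq, hs1_sq,
        div_mul_cancel₀ _ (by linarith : (1:ℝ) - p ≠ 0)]
    rw [h1, h2]; ring
  -- a.e. bound on entries
  set K : ℝ := max a (sp / s1) with hK
  have hK0 : 0 ≤ K := le_trans ha_pos.le (le_max_left _ _)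
  have haeb0 : ∀ i j : Fin n, i ≤ j → ∀ᵐ ω ∂P, |C ω i j| ≤ K := by
    intro i j hij
    filter_upwards [twopoint_ae P (hCmeas i j) hab hp0.le hp1.le
      (hCdist i j hij).1 (hCdist i j hij).2] with ω hω
    rcases hω with h | h <;> rw [h]
    · rw [abs_of_pos ha_pos]; exact le_max_left _ _
    · rw [hb_eq, abs_neg, abs_of_pos (by positivity)]; exact le_max_right _ _
  have haeb : ∀ i j : Fin n, ∀ᵐ ω ∂P, |C ω i j| ≤ K := by
    intro i j
    rcases le_total i j with hij | hji
    · exact haeb0 i j hij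
    · filter_upwards [haeb0 j i hji] with ω h
      rwa [← (hCsymm ω).apply i j]
  have hintC : ∀ i j : Fin n, Integrable (fun ω => C ω i j) P := by
    intro i j
    refine (integrable_const K).mono' (hCmeas i j).aestronglyMeasurable ?_
    filter_upwards [haeb i j] with ω h
    simpa using h
  have hintCC : ∀ i j k l : Fin n, Integrable (fun ω => C ω i j * C ω k l) P := by
    intro i j k l
    refine (integrable_const (K * K)).mono'
      (((hCmeas i j).mul (hCmeas k l)).aestronglyMeasurable) ?_
    filter_upwards [haeb i j, haeb k l] with ω h1 h2
    rw [Real.norm_eq_abs, abs_mul]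
    exact mul_le_mul h1 h2 (abs_nonneg _) hK0
  have hICC : ∀ i j k l : Fin n,
      ∫ ω, C ω i j * C ω k l ∂P = if op i j = op k l then (1:ℝ) else 0 := by
    have hred : ∀ (i j : Fin n) (ω : Ω), C ω i j = C ω (op i j).1 (op i j).2 :=
      fun i j ω => (op_symm_apply i j (hCsymm ω)).symm
    intro i j k l
    have hfe : (fun ω => C ω i j * C ω k l)
        = fun ω => C ω (op i j).1 (op i j).2 * C ω (op k l).1 (op k l).2 :=
      funext fun ω => by rw [← hred, ← hred]
    rw [hfe]
    by_cases h : op i j = op k l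
    · rw [if_pos h, h]
      exact hm2 _ _ (op_le k l)
    · rw [if_neg h]
      have hq : (⟨op i j, op_le i j⟩ : {q : Fin n × Fin n // q.1 ≤ q.2})
          ≠ ⟨op k l, op_le k l⟩ := fun hh => h (congrArg Subtype.val hh)
      have hind := hCindep.indepFun hq
      have := IndepFun.integral_mul_eq_mul_integral hind (hintC _ _).aestronglyMeasurable (hintC _ _).aestronglyMeasurable
      rw [show (fun ω => C ω (op i j).1 (op i j).2 * C ω (op k l).1 (op k l).2)
          = (fun ω => C ω (op i j).1 (op i j).2) * (fun ω => C ω (op k l).1 (op k l).2)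
          from rfl] at *
      rw [this, hm1 _ _ (op_le i j), hm1 _ _ (op_le k l)]
      ring
  -- entries of E acting on u1
  have hEv : ∀ (ω : Ω) (k : Fin n),
      (E ω).mulVec u1 k = ∑ l, (a * M k l * u1 l) * C ω k l := by
    intro ω k
    rw [hEeq ω]
    simp only [Matrix.mulVec, dotProduct, Matrix.smul_apply, Matrix.hadamard_apply,
      smul_eq_mul]
    exact Finset.sum_congr rfl fun l _ => by ring
  -- orthonormality of rows
  have hon : ∀ i j : Fin n, (∑ k, u i k * u j k) = if i = j then (1:ℝ) else 0 := by
    intro i j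
    by_cases h : i = j
    · subst h; rw [if_pos rfl]
      have h1 := hunit i
      unfold euclNorm at h1
      have h2 : (∑ k, u i k ^ 2) = 1 := by
        have := congrArg (fun x => x ^ 2) h1
        simpa [Real.sq_sqrt (Finset.sum_nonneg fun k _ => sq_nonneg (u i k))] using this
      calc ∑ k, u i k * u i k = ∑ k, u i k ^ 2 :=
            Finset.sum_congr rfl fun k _ => (sq _).symm
        _ = 1 := h2
    · rw [if_neg h]; exact horth i j h
  have ha_sq : a ^ 2 = (1 - p) / p := Real.sq_sqrt (div_nonneg (by linarith) hp0.le)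
  set z : Fin n := ⟨0, by omega⟩ with hz_def
  set o : Fin n := ⟨1, by omega⟩ with ho_def
  set c0 : ℝ := ((lam2 - lam1) ^ 2)⁻¹ with hc0
  set S : Ω → ℝ := fun ω => ∑ k, ((E ω).mulVec u1 k) ^ 2 with hS_def
  set T : Ω → ℝ := fun ω => ∑ m, u1 m * (E ω).mulVec u1 m with hT_def
  -- pointwise bound
  have hfg : ∀ ω, euclNorm ((R * E ω).mulVec u1) ^ 2 ≤ c0 * (S ω - T ω ^ 2) := by
    intro ω
    have h1 : euclNorm ((R * E ω).mulVec u1) ^ 2 = ∑ k, ((R * E ω).mulVec u1 k) ^ 2 := by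
      unfold euclNorm
      exact Real.sq_sqrt (Finset.sum_nonneg fun k _ => sq_nonneg _)
    have hRz : R = ∑ j ∈ Finset.univ.erase z,
        (lam j - lam z)⁻¹ • Matrix.vecMulVec (u j) (u j) := by
      rw [hR, hlam1]
    have key := Rvec_bound lam u hon hsorted z o rfl rfl ((E ω).mulVec u1)
    rw [h1]
    rw [show (R * E ω).mulVec u1 = R.mulVec ((E ω).mulVec u1) from
      (Matrix.mulVec_mulVec u1 R (E ω)).symm]
    rw [hRz]
    refine le_trans key (le_of_eq ?_)
    rw [hc0, hlam1, hlam2, hS_def, hT_def, hu1]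
  -- expansions
  set cc : Fin n → Fin n → ℝ := fun k l => a * M k l * u1 l with hcc
  set d : Fin n → Fin n → ℝ := fun k l => u1 k * (a * M k l * u1 l) with hd
  have hSexp : S = fun ω => ∑ k, ∑ l, ∑ l', (cc k l * cc k l') * (C ω k l * C ω k l') := by
    funext ω
    rw [hS_def]
    refine Finset.sum_congr rfl fun k _ => ?_
    rw [hEv ω k, sq, Finset.sum_mul_sum]
    exact Finset.sum_congr rfl fun l _ => Finset.sum_congr rfl fun l' _ => by rw [hcc]; ring
  have hT2exp : (fun ω => T ω ^ 2)
      = fun ω => ∑ k, ∑ l, ∑ k', ∑ l', (d k l * d k' l') * (C ω k l * C ω k' l') := by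
    funext ω
    have hT1 : T ω = ∑ k, ∑ l, d k l * C ω k l := by
      rw [hT_def]
      refine Finset.sum_congr rfl fun k _ => ?_
      rw [hEv ω k, Finset.mul_sum]
      exact Finset.sum_congr rfl fun l _ => by rw [hd]; ring
    rw [hT1, sq, Finset.sum_mul]
    refine Finset.sum_congr rfl fun k _ => ?_
    rw [Finset.sum_mul]
    refine Finset.sum_congr rfl fun l _ => ?_
    rw [Finset.mul_sum]
    refine Finset.sum_congr rfl fun k' _ => ?_
    rw [Finset.mul_sum]
    exact Finset.sum_congr rfl fun l' _ => by ring
  -- integrability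
  have hSint : Integrable S P := by
    rw [hSexp]
    exact integrable_finset_sum _ fun k _ => integrable_finset_sum _ fun l _ =>
      integrable_finset_sum _ fun l' _ => (hintCC k l k l').const_mul _
  have hT2int : Integrable (fun ω => T ω ^ 2) P := by
    rw [hT2exp]
    exact integrable_finset_sum _ fun k _ => integrable_finset_sum _ fun l _ =>
      integrable_finset_sum _ fun k' _ => integrable_finset_sum _ fun l' _ =>
        (hintCC k l k' l').const_mul _
  -- integrals
  have hIS : ∫ ω, S ω ∂P = ∑ k, ∑ l, cc k l ^ 2 := by
    rw [hSexp, integral_finset_sum _ fun k _ => integrable_finset_sum _ fun l _ =>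
      integrable_finset_sum _ fun l' _ => (hintCC k l k l').const_mul _]
    refine Finset.sum_congr rfl fun k _ => ?_
    rw [integral_finset_sum _ fun l _ =>
      integrable_finset_sum _ fun l' _ => (hintCC k l k l').const_mul _]
    have h3 : ∀ l : Fin n, ∫ ω, ∑ l', cc k l * cc k l' * (C ω k l * C ω k l') ∂P
        = ∑ l', (cc k l * cc k l') * (if l = l' then (1:ℝ) else 0) := by
      intro l
      rw [integral_finset_sum _ fun l' _ => (hintCC k l k l').const_mul _]
      refine Finset.sum_congr rfl fun l' _ => ?_
      rw [integral_const_mul, hICC k l k l']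
      simp only [op_right_cancel]
    rw [Finset.sum_congr rfl fun l _ => h3 l]
    simp [mul_ite, mul_zero, Finset.sum_ite_eq, sq]
  have hIT2 : ∫ ω, T ω ^ 2 ∂P
      = ∑ k, ∑ l, (d k l * d k l + d k l * d l k - if k = l then d k l * d k l else 0) := by
    rw [hT2exp, integral_finset_sum _ fun k _ => integrable_finset_sum _ fun l _ =>
      integrable_finset_sum _ fun k' _ => integrable_finset_sum _ fun l' _ =>
        (hintCC k l k' l').const_mul _]
    refine Finset.sum_congr rfl fun k _ => ?_
    rw [integral_finset_sum _ fun l _ => integrable_finset_sum _ fun k' _ =>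
      integrable_finset_sum _ fun l' _ => (hintCC k l k' l').const_mul _]
    refine Finset.sum_congr rfl fun l _ => ?_
    rw [integral_finset_sum _ fun k' _ =>
      integrable_finset_sum _ fun l' _ => (hintCC k l k' l').const_mul _]
    have hstep : ∀ k' : Fin n, ∫ ω, ∑ l', (d k l * d k' l') * (C ω k l * C ω k' l') ∂P
        = ∑ l', (d k l * d k' l') * (if op k' l' = op k l then (1:ℝ) else 0) := by
      intro k'
      rw [integral_finset_sum _ fun l' _ => (hintCC k l k' l').const_mul _]
      refine Finset.sum_congr rfl fun l' _ => ?_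
      rw [integral_const_mul, hICC k l k' l']
      congr 1
      by_cases h : op k l = op k' l'
      · rw [if_pos h, if_pos h.symm]
      · rw [if_neg h, if_neg fun hh => h hh.symm]
    rw [Finset.sum_congr rfl fun k' _ => hstep k']
    exact sum_op_collapse k l fun k' l' => d k l * d k' l'
  -- symmetry of d and value computations
  have hdsymm : ∀ k l : Fin n, d l k = d k l := by
    intro k l
    rw [hd]
    simp only
    rw [hsymm.apply k l]
    ring
  have hIT2' : ∫ ω, T ω ^ 2 ∂P
      = ((1 - p) / p) * (2 * (∑ i, ∑ j, (u1 i) ^ 2 * (M i j) ^ 2 * (u1 j) ^ 2)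
        - ∑ k, ((u1 k) ^ 2) ^ 2 * (M k k) ^ 2) := by
    rw [hIT2]
    have h1 : ∀ k l : Fin n, d k l * d k l + d k l * d l k - (if k = l then d k l * d k l else 0)
        = 2 * (d k l * d k l) - (if k = l then d k l * d k l else 0) := by
      intro k l
      rw [hdsymm k l]
      ring
    rw [Finset.sum_congr rfl fun k _ => Finset.sum_congr rfl fun l _ => h1 k l]
    have h2 : ∀ k l : Fin n, d k l * d k l = ((1 - p)/p) * (u1 k ^ 2 * M k l ^ 2 * u1 l ^ 2) := by
      intro k l
      rw [hd]
      simp only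
      rw [← ha_sq]
      ring
    simp only [Finset.sum_sub_distrib]
    have e1 : ∑ k, ∑ l, (if k = l then d k l * d k l else 0) = ∑ k, d k k * d k k := by
      refine Finset.sum_congr rfl fun k _ => ?_
      simp [Finset.sum_ite_eq]
    have e2 : ∑ k : Fin n, ∑ l : Fin n, 2 * (d k l * d k l)
        = 2 * (((1 - p)/p) * ∑ i, ∑ j, (u1 i) ^ 2 * (M i j) ^ 2 * (u1 j) ^ 2) := by
      simp only [Finset.mul_sum]
      refine Finset.sum_congr rfl fun k _ => Finset.sum_congr rfl fun l _ => ?_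
      rw [h2 k l]
    have e3 : ∑ k : Fin n, d k k * d k k
        = ((1 - p)/p) * ∑ k, ((u1 k) ^ 2) ^ 2 * (M k k) ^ 2 := by
      rw [Finset.mul_sum]
      refine Finset.sum_congr rfl fun k _ => ?_
      rw [h2 k k]; ring
    rw [e1, e2, e3]
    ring
  have hIS' : ∫ ω, S ω ∂P = ((1 - p) / p) * ∑ k, (u1 k) ^ 2 * ∑ i, (M i k) ^ 2 := by
    rw [hIS, Finset.sum_comm]
    rw [Finset.mul_sum]
    refine Finset.sum_congr rfl fun k _ => ?_
    rw [Finset.mul_sum, Finset.mul_sum]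
    refine Finset.sum_congr rfl fun l _ => ?_
    rw [hcc]
    simp only
    rw [← ha_sq]
    ring
  -- conclude
  have hg_int : Integrable (fun ω => c0 * (S ω - T ω ^ 2)) P :=
    ((hSint.sub hT2int).const_mul c0)
  calc ∫ ω, euclNorm ((R * E ω).mulVec u1) ^ 2 ∂P
      ≤ ∫ ω, c0 * (S ω - T ω ^ 2) ∂P :=
        integral_mono_of_nonneg (Filter.Eventually.of_forall fun ω => sq_nonneg _)
          hg_int (Filter.Eventually.of_forall hfg)
    _ = c0 * ((∫ ω, S ω ∂P) - ∫ ω, T ω ^ 2 ∂P) := by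
        rw [integral_const_mul, integral_sub hSint hT2int]
    _ = (1 / (lam2 - lam1) ^ 2) * ((1 - p) / p) *
        ((∑ k, (u1 k) ^ 2 * ∑ i, (M i k) ^ 2) -
          (2 * (∑ i, ∑ j, (u1 i) ^ 2 * (M i j) ^ 2 * (u1 j) ^ 2) -
            ∑ k, ((u1 k) ^ 2) ^ 2 * (M k k) ^ 2)) := by
        rw [hIS', hIT2', hc0, one_div]
        ring
end

section
/- Let M be a deterministic n×n symmetric matrix, p ∈ (0,1), and E the subsampling residual of M. Then E[E] = 0 and E[E²] is a diagonal matrix whose i-th diagonal entry equals ((1−p)/p)·‖M_i‖₂², where M_i is the i-th column of M. -/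
open MeasureTheory ProbabilityTheory Filter Matrix
open scoped ENNReal NNReal BigOperators

lemma twoPointAux {Ω : Type*} [MeasurableSpace Ω] (P : Measure Ω) [IsProbabilityMeasure P]
    (f : Ω → ℝ) (hf : Measurable f) (a b pa pb : ℝ) (hab : a ≠ b)
    (hpa : 0 ≤ pa) (hpb : 0 ≤ pb) (hsum : pa + pb = 1)
    (hA : P {ω | f ω = a} = ENNReal.ofReal pa)
    (hB : P {ω | f ω = b} = ENNReal.ofReal pb) (φ : ℝ → ℝ) :
    Integrable (fun ω => φ (f ω)) P ∧ ∫ ω, φ (f ω) ∂P = pa * φ a + pb * φ b := by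
  set A := {ω | f ω = a} with hAdef
  set B := {ω | f ω = b} with hBdef
  have hAm : MeasurableSet A := hf (measurableSet_singleton a)
  have hBm : MeasurableSet B := hf (measurableSet_singleton b)
  have hdisj : Disjoint A B := Set.disjoint_left.mpr fun ω hωA hωB => hab (by
    rw [hAdef] at hωA; rw [hBdef] at hωB
    exact hωA ▸ hωB)
  have hunion : P (A ∪ B) = 1 := by
    rw [measure_union hdisj hBm, hA, hB, ← ENNReal.ofReal_add hpa hpb, hsum, ENNReal.ofReal_one]
  have hae : ∀ᵐ ω ∂P, ω ∈ A ∪ B := by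
    have hc : P (A ∪ B)ᶜ = 0 := by
      rw [measure_compl (hAm.union hBm) (measure_ne_top _ _), hunion, measure_univ, tsub_self]
    exact (MeasureTheory.ae_iff).mpr (by rw [← hc]; rfl)
  set g : Ω → ℝ := fun ω => A.indicator (fun _ => φ a) ω + B.indicator (fun _ => φ b) ω with hgdef
  have heq : (fun ω => φ (f ω)) =ᵐ[P] g := by
    filter_upwards [hae] with ω hω
    rcases hω with h | h
    · have hfa : f ω = a := h
      have hnb : ω ∉ B := fun hb => hab (hfa ▸ hb)
      simp [hgdef, Set.indicator_of_mem h, Set.indicator_of_notMem hnb, hfa]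
    · have hfb : f ω = b := h
      have hna : ω ∉ A := fun ha => hab (ha ▸ hfb)
      simp [hgdef, Set.indicator_of_mem h, Set.indicator_of_notMem hna, hfb]
  have hgint : Integrable g P :=
    ((integrable_const (φ a)).indicator hAm).add ((integrable_const (φ b)).indicator hBm)
  refine ⟨hgint.congr heq.symm, ?_⟩
  rw [integral_congr_ae heq, hgdef]
  rw [integral_add ((integrable_const (φ a)).indicator hAm) ((integrable_const (φ b)).indicator hBm),
    integral_indicator_const _ hAm, integral_indicator_const _ hBm, measureReal_def, measureReal_def, hA, hB,
    ENNReal.toReal_ofReal hpa, ENNReal.toReal_ofReal hpb, smul_eq_mul, smul_eq_mul]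

/-- the subsampling residual has mean zero, and `E[E²]` is the diagonal
matrix with entries `((1-p)/p)·‖M_i‖₂²`. -/
theorem subsample_residual_mean_and_second_moment
    {Ω : Type*} [MeasurableSpace Ω] (P : Measure Ω) [IsProbabilityMeasure P]
    {n : ℕ} (M : Matrix (Fin n) (Fin n) ℝ) (p : ℝ)
    (E : Ω → Matrix (Fin n) (Fin n) ℝ)
    (hsymm : M.IsSymm) (hp0 : 0 < p) (hp1 : p < 1)
    (hE : IsSubsampleResidual P p M E) :
    (∀ i j : Fin n, (∫ ω, E ω i j ∂P) = 0) ∧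
    (∀ i j : Fin n, (∫ ω, (E ω * E ω) i j ∂P) =
      if i = j then (1 - p) / p * ∑ k, (M k i) ^ 2 else 0) := by
  obtain ⟨C, ⟨hCsymm, hCmeas, hCindep, hCdist⟩, hEeq⟩ := hE
  set a : ℝ := Real.sqrt ((1 - p) / p) with ha
  set b : ℝ := Real.sqrt (p / (1 - p)) with hb
  have h1p : (0:ℝ) < 1 - p := by linarith
  have hanneg : 0 ≤ a := Real.sqrt_nonneg _
  have hbnneg : 0 ≤ b := Real.sqrt_nonneg _
  have hapos : 0 < a := Real.sqrt_pos.mpr (div_pos h1p hp0)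
  have hbpos : 0 < b := Real.sqrt_pos.mpr (div_pos hp0 h1p)
  have hane : a ≠ -b := by nlinarith
  have hCsym : ∀ ω (i j : Fin n), C ω j i = C ω i j := fun ω i j => (hCsymm ω).apply i j
  -- distribution for all pairs
  have hdist : ∀ i j : Fin n, P {ω | C ω i j = a} = ENNReal.ofReal p ∧
      P {ω | C ω i j = -b} = ENNReal.ofReal (1 - p) := by
    intro i j
    rcases le_total i j with h | h
    · exact hCdist i j h
    · have := hCdist j i h
      have he : ∀ x : ℝ, {ω | C ω i j = x} = {ω | C ω j i = x} := fun x => by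
        ext ω; simp [hCsym ω j i]
      rw [he a, he (-b)]; exact this
  have key : ∀ (i j : Fin n) (φ : ℝ → ℝ),
      Integrable (fun ω => φ (C ω i j)) P ∧
      ∫ ω, φ (C ω i j) ∂P = p * φ a + (1 - p) * φ (-b) := fun i j φ =>
    twoPointAux P _ (hCmeas i j) a (-b) p (1 - p) hane hp0.le h1p.le (by ring)
      (hdist i j).1 (hdist i j).2 φ
  -- mean value
  have hmean : p * a + (1 - p) * (-b) = 0 := by
    have h1 : p * a = Real.sqrt (p * (1 - p)) := by
      rw [ha, show p * Real.sqrt ((1-p)/p) = Real.sqrt (p^2) * Real.sqrt ((1-p)/p) by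
        rw [Real.sqrt_sq hp0.le], ← Real.sqrt_mul (sq_nonneg p)]
      congr 1; field_simp
    have h2 : (1 - p) * b = Real.sqrt (p * (1 - p)) := by
      rw [hb, show (1-p) * Real.sqrt (p/(1-p)) = Real.sqrt ((1-p)^2) * Real.sqrt (p/(1-p)) by
        rw [Real.sqrt_sq h1p.le], ← Real.sqrt_mul (sq_nonneg (1-p))]
      congr 1; field_simp
    have : (1 - p) * (-b) = -((1-p) * b) := by ring
    rw [this, h2, h1]; ring
  have hasq : a ^ 2 = (1 - p) / p := Real.sq_sqrt (le_of_lt (div_pos h1p hp0))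
  have hbsq : b ^ 2 = p / (1 - p) := Real.sq_sqrt (le_of_lt (div_pos hp0 h1p))
  have hsq2 : p * a ^ 2 + (1 - p) * (-b) ^ 2 = 1 := by
    rw [neg_pow, hasq, hbsq]; field_simp; ring
  -- canonical index
  set idx : Fin n → Fin n → {q : Fin n × Fin n // q.1 ≤ q.2} := fun i j =>
    if h : i ≤ j then ⟨(i, j), h⟩ else ⟨(j, i), le_of_not_ge h⟩ with hidxdef
  have hidx : ∀ (i j : Fin n) (ω : Ω), C ω i j = C ω (idx i j).1.1 (idx i j).1.2 := by
    intro i j ω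
    rw [hidxdef]; dsimp only; split
    · rfl
    · exact hCsym ω j i
  have hidx_ne : ∀ i j k : Fin n, i ≠ j → idx i k ≠ idx k j := by
    intro i j k hij heq
    apply hij
    have h := congrArg Subtype.val heq
    rw [hidxdef] at h; dsimp only at h
    split at h <;> split at h <;>
      simp only [Prod.mk.injEq] at h <;> omega
  -- products
  have hprod : ∀ i j k : Fin n, Integrable (fun ω => C ω i k * C ω k j) P ∧
      ∫ ω, C ω i k * C ω k j ∂P = if i = j then 1 else 0 := by
    intro i j k
    by_cases hij : i = j
    · subst hij
      have hfe : (fun ω => C ω i k * C ω k i) = fun ω => (C ω i k) ^ 2 :=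
        funext fun ω => by rw [hCsym ω i k]; ring
      rw [hfe, if_pos rfl]
      refine ⟨(key i k (· ^ 2)).1, ?_⟩
      rw [(key i k (· ^ 2)).2]; exact hsq2
    · have hne := hidx_ne i j k hij
      have h1 : (fun ω => C ω i k) = fun ω => C ω (idx i k).1.1 (idx i k).1.2 :=
        funext (hidx i k)
      have h2 : (fun ω => C ω k j) = fun ω => C ω (idx k j).1.1 (idx k j).1.2 :=
        funext (hidx k j)
      have hind : IndepFun (fun ω => C ω i k) (fun ω => C ω k j) P := by
        rw [h1, h2]; exact hCindep.indepFun hne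
      have hint1 : Integrable (fun ω => C ω i k) P := (key i k id).1
      have hint2 : Integrable (fun ω => C ω k j) P := (key k j id).1
      refine ⟨hind.integrable_mul hint1 hint2, ?_⟩
      rw [if_neg hij]
      have := hind.integral_fun_mul_eq_mul_integral hint1.1 hint2.1
      have hval1 : ∫ ω, C ω i k ∂P = 0 := by
        have h := (key i k id).2; simp only [id_eq] at h; rw [h]; linarith [hmean]
      have hval2 : ∫ ω, C ω k j ∂P = 0 := by
        have h := (key k j id).2; simp only [id_eq] at h; rw [h]; linarith [hmean]
      calc ∫ ω, C ω i k * C ω k j ∂P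
          = (∫ ω, C ω i k ∂P) * ∫ ω, C ω k j ∂P := this
        _ = 0 := by rw [hval1, hval2, mul_zero]
  have hEentry : ∀ (ω : Ω) (i j : Fin n), E ω i j = (a * M i j) * C ω i j := by
    intro ω i j
    rw [hEeq ω]; simp [Matrix.smul_apply, Matrix.hadamard_apply, smul_eq_mul]; ring
  constructor
  · intro i j
    have : (fun ω => E ω i j) = fun ω => (a * M i j) * C ω i j := funext fun ω => hEentry ω i j
    rw [this, integral_const_mul]
    have hval : ∫ ω, C ω i j ∂P = 0 := by
      have h := (key i j id).2; simp only [id_eq] at h; rw [h]; linarith [hmean]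
    rw [hval, mul_zero]
  · intro i j
    have hterm : ∀ ω, (E ω * E ω) i j =
        ∑ k, (a ^ 2 * (M i k * M k j)) * (C ω i k * C ω k j) := by
      intro ω
      rw [Matrix.mul_apply]
      refine Finset.sum_congr rfl fun k _ => ?_
      rw [hEentry ω i k, hEentry ω k j]; ring
    have hfun : (fun ω => (E ω * E ω) i j) =
        fun ω => ∑ k, (a ^ 2 * (M i k * M k j)) * (C ω i k * C ω k j) := funext hterm
    rw [hfun, integral_finset_sum _ (fun k _ => ((hprod i j k).1.const_mul _))]
    have : ∀ k, ∫ ω, (a ^ 2 * (M i k * M k j)) * (C ω i k * C ω k j) ∂P =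
        (a ^ 2 * (M i k * M k j)) * if i = j then 1 else 0 := fun k => by
      rw [integral_const_mul, (hprod i j k).2]
    simp_rw [this]
    by_cases hij : i = j
    · subst hij
      rw [if_pos rfl, if_pos rfl, hasq, Finset.mul_sum]
      refine Finset.sum_congr rfl fun k _ => ?_
      rw [hsymm.apply k i]  -- M i k = M k i ?
      ring
    · rw [if_neg hij, if_neg hij]
      simp
end
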